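/- arXiv:1911.00438 — 6 statements merged into one kernel-verified Lean document; each statement's English description precedes it below -/
import Mathlib

section
/- Let μ be a probability measure on a measurable space Ω and f a probability density with respect to μ. For any measurable set A ⊆ Ω with 0 < μ(A) < 1, the inequality ∫_A f dμ ≤ (H(f; μ) + log 2) / (−log μ(A)) holds, where H(f; μ) = ∫ f log f dμ is the relative entropy. -/
open MeasureTheory Real

lemma young_ineq (x c : ℝ) (hx : 0 ≤ x) : x * c ≤ x * Real.log x + Real.exp c - x := by
  rcases eq_or_lt_of_le hx with h | h
  · have : x = 0 := h.symm
    subst this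
    simp
    positivity
  · have h1 : (c - Real.log x) + 1 ≤ Real.exp (c - Real.log x) := Real.add_one_le_exp _
    have h2 : Real.exp (c - Real.log x) = Real.exp c / x := by
      rw [Real.exp_sub, Real.exp_log h]
    rw [h2] at h1
    have h3 := mul_le_mul_of_nonneg_left h1 h.le
    rw [mul_div_cancel₀ _ h.ne'] at h3
    nlinarith [h3]

theorem entropy_set_bound {Ω : Type*} [MeasurableSpace Ω] (μ : Measure Ω)
    [IsProbabilityMeasure μ] (f : Ω → ℝ) (hmf : Measurable f) (hf : 0 ≤ f)
    (hf1 : ∫ ω, f ω ∂μ = 1)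
    (hent : Integrable (fun ω => f ω * Real.log (f ω)) μ)
    (A : Set Ω) (hA : MeasurableSet A) (h0 : 0 < μ A) (h1 : μ A < 1) :
    ∫ ω in A, f ω ∂μ ≤
      ((∫ ω, f ω * Real.log (f ω) ∂μ) + Real.log 2) / (-Real.log (μ A).toReal) := by
  have hf_int : Integrable f μ := by
    by_contra h
    rw [integral_undef h] at hf1
    norm_num at hf1
  set a : ℝ := (μ A).toReal with ha_def
  have ha0 : 0 < a := ENNReal.toReal_pos h0.ne' (lt_of_lt_of_le h1 le_top).ne
  have ha1 : a < 1 := by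
    rw [ha_def, ← ENNReal.toReal_one]
    exact ENNReal.toReal_strict_mono (by norm_num) h1
  set t : ℝ := -Real.log a with ht_def
  have ht : 0 < t := by
    have := Real.log_neg ha0 ha1
    linarith
  set Z : ℝ := 2 - a with hZ_def
  have hZ0 : 0 < Z := by linarith
  set H : ℝ := ∫ ω, f ω * Real.log (f ω) ∂μ with hH_def
  set b : Ω → ℝ := fun ω => A.indicator (fun _ => t) ω - Real.log Z with hb_def
  -- key: t * ∫_A f - log Z ≤ H
  have hint1 : Integrable (A.indicator f) μ := hf_int.indicator hA
  have hfb_eq : (fun ω => f ω * b ω)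
      = fun ω => t * A.indicator f ω - Real.log Z * f ω := by
    funext ω
    by_cases hω : ω ∈ A <;>
      simp [hb_def, Set.indicator_of_mem, Set.indicator_of_notMem, hω] <;> ring
  have hfb_int : Integrable (fun ω => f ω * b ω) μ := by
    rw [hfb_eq]
    exact (hint1.const_mul t).sub (hf_int.const_mul _)
  have hexp_eq : (fun ω => Real.exp (b ω))
      = fun ω => Real.exp (-Real.log Z)
          + A.indicator (fun _ => Real.exp (t - Real.log Z) - Real.exp (-Real.log Z)) ω := by
    funext ω
    by_cases hω : ω ∈ A <;>
      simp [hb_def, Set.indicator_of_mem, Set.indicator_of_notMem, hω] <;> ring_nf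
  have hexp_int : Integrable (fun ω => Real.exp (b ω)) μ := by
    rw [hexp_eq]
    exact (integrable_const _).add ((integrable_const _).indicator hA)
  have hexp_integral : ∫ ω, Real.exp (b ω) ∂μ = 1 := by
    rw [hexp_eq, integral_add (integrable_const _) ((integrable_const _).indicator hA),
      integral_const, integral_indicator_const _ hA]
    have hexpt : Real.exp t = a⁻¹ := by
      rw [ht_def, Real.exp_neg, Real.exp_log ha0]
    have hexpZ : Real.exp (-Real.log Z) = Z⁻¹ := by
      rw [Real.exp_neg, Real.exp_log hZ0]
    rw [Real.exp_sub, hexpt, hexpZ]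
    simp only [probReal_univ, measure_univ, measureReal_def, ← ha_def, ENNReal.toReal_one, smul_eq_mul, one_mul]
    rw [Real.exp_log hZ0]
    field_simp
    ring
  have hadd : Integrable (fun ω => f ω * Real.log (f ω) + Real.exp (b ω)) μ :=
    hent.add hexp_int
  have key : t * (∫ ω in A, f ω ∂μ) - Real.log Z ≤ H := by
    have hmono : ∫ ω, f ω * b ω ∂μ
        ≤ ∫ ω, (f ω * Real.log (f ω) + Real.exp (b ω) - f ω) ∂μ := by
      apply integral_mono hfb_int (hadd.sub hf_int)
      intro ω
      exact young_ineq (f ω) (b ω) (hf ω)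
    rw [integral_sub hadd hf_int, integral_add hent hexp_int,
      hexp_integral, hf1] at hmono
    have hlhs : ∫ ω, f ω * b ω ∂μ = t * (∫ ω in A, f ω ∂μ) - Real.log Z * 1 := by
      rw [hfb_eq, integral_sub (hint1.const_mul t) (hf_int.const_mul _),
        integral_const_mul, integral_const_mul, integral_indicator hA, hf1]
    rw [hlhs, ← hH_def] at hmono
    linarith
  have hlogZ : Real.log Z ≤ Real.log 2 := Real.log_le_log hZ0 (by linarith)
  rw [le_div_iff₀ ht]
  linarith
end

section
/- Let (Ω₁, μ₁) and (Ω₂, μ₂) be probability spaces and let f be a probability density on Ω₁ × Ω₂ with respect to μ = μ₁ ⊗ μ₂. Let f₁ be the density of the first marginal of f dμ with respect to μ₁. Then H(f₁; μ₁) ≤ H(f; μ), where H denotes relative entropy. -/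
open MeasureTheory Real

private lemma sub_one_le_mul_log {t : ℝ} (ht : 0 ≤ t) : t - 1 ≤ t * Real.log t := by
  rcases ht.eq_or_lt with h | h
  · simp [← h]
  · have := Real.one_sub_inv_le_log_of_pos h
    have h' : t * (1 - t⁻¹) ≤ t * Real.log t :=
      mul_le_mul_of_nonneg_left this ht
    have : t * (1 - t⁻¹) = t - 1 := by
      field_simp
    linarith

theorem marginal_entropy_le {Ω₁ Ω₂ : Type*} [MeasurableSpace Ω₁] [MeasurableSpace Ω₂]
    (μ₁ : Measure Ω₁) (μ₂ : Measure Ω₂)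
    [IsProbabilityMeasure μ₁] [IsProbabilityMeasure μ₂]
    (f : Ω₁ × Ω₂ → ℝ) (hmf : Measurable f) (hf : 0 ≤ f)
    (hf1 : ∫ z, f z ∂(μ₁.prod μ₂) = 1)
    (hent : Integrable (fun z => f z * Real.log (f z)) (μ₁.prod μ₂)) :
    ∫ x, (∫ y, f (x, y) ∂μ₂) * Real.log (∫ y, f (x, y) ∂μ₂) ∂μ₁ ≤
      ∫ z, f z * Real.log (f z) ∂(μ₁.prod μ₂) := by
  -- f is integrable since f ≤ 1 + f log f
  have hfi : Integrable f (μ₁.prod μ₂) := by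
    refine Integrable.mono' (hent.abs.add (integrable_const 1)) hmf.aestronglyMeasurable ?_
    refine ae_of_all _ fun z => ?_
    have h1 : f z - 1 ≤ f z * Real.log (f z) := sub_one_le_mul_log (hf z)
    have h2 : |f z| = f z := abs_of_nonneg (hf z)
    have h3 : f z * Real.log (f z) ≤ |f z * Real.log (f z)| := le_abs_self _
    simp only [Pi.add_apply, Real.norm_eq_abs, h2]
    linarith
  have hentslice : ∀ᵐ x ∂μ₁, Integrable (fun y => f (x, y) * Real.log (f (x, y))) μ₂ :=
    hent.prod_right_ae
  have hfslice : ∀ᵐ x ∂μ₁, Integrable (fun y => f (x, y)) μ₂ := hfi.prod_right_ae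
  set g : Ω₁ → ℝ := fun x => ∫ y, f (x, y) * Real.log (f (x, y)) ∂μ₂ with hg_def
  have hgi : Integrable g μ₁ := hent.integral_prod_left
  have hRHS : ∫ z, f z * Real.log (f z) ∂(μ₁.prod μ₂) = ∫ x, g x ∂μ₁ :=
    MeasureTheory.integral_prod _ hent
  -- pointwise Jensen
  have hpt : ∀ᵐ x ∂μ₁,
      (∫ y, f (x, y) ∂μ₂) * Real.log (∫ y, f (x, y) ∂μ₂) ≤ g x := by
    filter_upwards [hentslice, hfslice] with x hx1 hx2
    have := Real.convexOn_mul_log.map_integral_le (μ := μ₂) (f := fun y => f (x, y))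
      Real.continuous_mul_log.continuousOn isClosed_Ici
      (ae_of_all _ fun y => hf (x, y)) hx2 (by exact hx1)
    exact this
  -- measurability of the LHS integrand
  have hm1 : Measurable fun x => ∫ y, f (x, y) ∂μ₂ := hmf.stronglyMeasurable.integral_prod_right'.measurable
  have hmL : AEStronglyMeasurable
      (fun x => (∫ y, f (x, y) ∂μ₂) * Real.log (∫ y, f (x, y) ∂μ₂)) μ₁ :=
    (hm1.mul (Real.measurable_log.comp hm1)).aestronglyMeasurable
  -- integrability of the LHS integrand
  have hLi : Integrable
      (fun x => (∫ y, f (x, y) ∂μ₂) * Real.log (∫ y, f (x, y) ∂μ₂)) μ₁ := by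
    refine Integrable.mono' (hgi.abs.add (integrable_const 1)) hmL ?_
    filter_upwards [hpt] with x hx
    have h0 : (0:ℝ) ≤ ∫ y, f (x, y) ∂μ₂ := integral_nonneg fun y => hf (x, y)
    have hlow : (∫ y, f (x, y) ∂μ₂) - 1 ≤
        (∫ y, f (x, y) ∂μ₂) * Real.log (∫ y, f (x, y) ∂μ₂) := sub_one_le_mul_log h0
    have := le_abs_self (g x)
    rw [Real.norm_eq_abs, abs_le]
    constructor
    · simp only [Pi.add_apply]
      have := neg_abs_le (g x)
      nlinarith
    · simp only [Pi.add_apply]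
      linarith
  rw [hRHS]
  exact integral_mono_ae hLi hgi hpt
end

section
/- Let H_n be the (n−1)×(n−1) symmetric tridiagonal matrix with diagonal entries (H_n)_{jj} = b_j + b_{j+1} and off-diagonal entries (H_n)_{j,j+1} = (H_n)_{j+1,j} = −b_{j+1}, where b₁, …, b_n are real numbers with b_j ≥ c > 0 for all j. Then the smallest eigenvalue of H_n satisfies λ_min(H_n) ≥ 6c / ((n−1)(n+1)) for all n ≥ 2. -/
open Matrix Finset

private lemma gauss_cube (N : ℕ) :
    6 * (∑ j ∈ Finset.range N, (j : ℝ) * ((N : ℝ) - (j : ℝ)))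
      = (N : ℝ) * ((N : ℝ) * (N : ℝ) - 1) := by
  induction N with
  | zero => simp
  | succ p ih =>
    have hg : (∑ i ∈ Finset.range (p + 1), (i : ℝ)) * 2 = ((p : ℝ) + 1) * p := by
      have h := Finset.sum_range_id_mul_two (p + 1)
      simp only [Nat.add_sub_cancel] at h
      rw [← Nat.cast_sum]
      exact_mod_cast congrArg (fun x : ℕ => (x : ℝ)) h
    have hstep : ∑ j ∈ Finset.range (p + 1), (j : ℝ) * (((p : ℝ) + 1) - j)
        = (∑ j ∈ Finset.range p, (j : ℝ) * ((p : ℝ) - j))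
          + (∑ j ∈ Finset.range (p + 1), (j : ℝ)) := by
      have h1 : ∀ j ∈ Finset.range (p + 1),
          (j : ℝ) * (((p : ℝ) + 1) - j) = (j : ℝ) * ((p : ℝ) - j) + j := by
        intro j _; ring
      rw [Finset.sum_congr rfl h1, Finset.sum_add_distrib,
        Finset.sum_range_succ (fun j => (j : ℝ) * ((p : ℝ) - j))]
      ring
    push_cast
    rw [hstep]
    nlinarith [ih, hg]

theorem tridiagonal_min_eigenvalue (n : ℕ) (hn : 2 ≤ n) (c : ℝ) (hc : 0 < c)
    (b : Fin n → ℝ) (hb : ∀ j, c ≤ b j)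
    (H : Matrix (Fin (n - 1)) (Fin (n - 1)) ℝ)
    (hH : ∀ i j : Fin (n - 1),
      H i j =
        if (i : ℕ) = (j : ℕ) then
          b ⟨i, by have := i.isLt; omega⟩ + b ⟨(i : ℕ) + 1, by have := i.isLt; omega⟩
        else if (i : ℕ) + 1 = (j : ℕ) ∨ (j : ℕ) + 1 = (i : ℕ) then
          -b ⟨max (i : ℕ) (j : ℕ), by have := i.isLt; have := j.isLt; omega⟩
        else 0)
    (lam : ℝ) (hlam : Module.End.HasEigenvalue (Matrix.toLin' H) lam) :
    6 * c / (((n : ℝ) - 1) * ((n : ℝ) + 1)) ≤ lam := by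
  obtain ⟨m, rfl⟩ : ∃ m, n = m + 2 := ⟨n - 2, by omega⟩
  obtain ⟨v, hv⟩ := hlam.exists_hasEigenvector
  have hv0 : v ≠ 0 := hv.right
  have hmul : H.mulVec v = lam • v := by
    have h := hv.apply_eq_smul
    rwa [Matrix.toLin'_apply] at h
  -- extended vector with zero boundary values
  obtain ⟨W, hW⟩ : ∃ W : ℕ → ℝ, ∀ k,
      W k = if h : 1 ≤ k ∧ k - 1 < m + 2 - 1 then v ⟨k - 1, h.2⟩ else 0 := ⟨_, fun _ => rfl⟩
  obtain ⟨B, hB⟩ : ∃ B : ℕ → ℝ, ∀ k,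
      B k = if h : k < m + 2 then b ⟨k, h⟩ else 0 := ⟨_, fun _ => rfl⟩
  obtain ⟨D, hD⟩ : ∃ D : ℕ → ℝ, ∀ k, D k = W (k + 1) - W k := ⟨_, fun _ => rfl⟩
  have hW0 : W 0 = 0 := by rw [hW]; simp
  have hWtop : W (m + 2) = 0 := by rw [hW, dif_neg]; omega
  have hWtop' : W (m + 1 + 1) = 0 := hWtop
  have hWv : ∀ j : Fin (m + 2 - 1), W ((j : ℕ) + 1) = v j := by
    intro j
    have hj := j.isLt
    rw [hW, dif_pos (show 1 ≤ (j : ℕ) + 1 ∧ (j : ℕ) + 1 - 1 < m + 2 - 1 by omega)]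
    exact congrArg v (Fin.ext (by simp))
  have hvW : ∀ (x : ℕ) (h : x < m + 2 - 1), v ⟨x, h⟩ = W (x + 1) :=
    fun x h => (hWv ⟨x, h⟩).symm
  have hbB : ∀ (x : ℕ) (h : x < m + 2), b ⟨x, h⟩ = B x := fun x h => by
    rw [hB, dif_pos h]
  have hBc : ∀ k, k < m + 2 → c ≤ B k := by
    intro k hk; rw [hB, dif_pos hk]; exact hb _
  -- row expansion
  have hrow : ∀ i j : Fin (m + 2 - 1), H i j * v j =
      (if (j : ℕ) = (i : ℕ) then (B (i : ℕ) + B ((i : ℕ) + 1)) * W ((i : ℕ) + 1) else 0)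
      + (if (j : ℕ) + 1 = (i : ℕ) then -(B (i : ℕ)) * W (i : ℕ) else 0)
      + (if (j : ℕ) = (i : ℕ) + 1 then -(B ((i : ℕ) + 1)) * W ((i : ℕ) + 2) else 0) := by
    intro i j
    have hi := i.isLt
    have hj := j.isLt
    rw [hH i j]
    by_cases h1 : (i : ℕ) = (j : ℕ)
    · rw [if_pos h1, if_pos (show (j : ℕ) = (i : ℕ) from h1.symm),
        if_neg (show ¬((j : ℕ) + 1 = (i : ℕ)) by omega),
        if_neg (show ¬((j : ℕ) = (i : ℕ) + 1) by omega),
        hbB, hbB, ← Fin.eta j j.isLt, hvW, show (j : ℕ) + 1 = (i : ℕ) + 1 by omega]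
      ring
    · rw [if_neg h1]
      by_cases h2 : (i : ℕ) + 1 = (j : ℕ)
      · rw [if_pos (Or.inl h2),
          if_neg (show ¬((j : ℕ) = (i : ℕ)) by omega),
          if_neg (show ¬((j : ℕ) + 1 = (i : ℕ)) by omega),
          if_pos (show (j : ℕ) = (i : ℕ) + 1 from h2.symm),
          hbB, ← Fin.eta j j.isLt, hvW,
          show max (i : ℕ) (j : ℕ) = (i : ℕ) + 1 by omega,
          show (j : ℕ) + 1 = (i : ℕ) + 2 by omega]
        ring
      · by_cases h3 : (j : ℕ) + 1 = (i : ℕ)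
        · rw [if_pos (Or.inr h3),
            if_neg (show ¬((j : ℕ) = (i : ℕ)) by omega),
            if_pos h3,
            if_neg (show ¬((j : ℕ) = (i : ℕ) + 1) by omega),
            hbB, ← Fin.eta j j.isLt, hvW,
            show max (i : ℕ) (j : ℕ) = (i : ℕ) by omega,
            show (j : ℕ) + 1 = (i : ℕ) from h3]
          ring
        · rw [if_neg (show ¬((i : ℕ) + 1 = (j : ℕ) ∨ (j : ℕ) + 1 = (i : ℕ)) by tauto),
            if_neg (show ¬((j : ℕ) = (i : ℕ)) by omega),
            if_neg (show ¬((j : ℕ) + 1 = (i : ℕ)) by omega),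
            if_neg (show ¬((j : ℕ) = (i : ℕ) + 1) by omega)]
          ring
  -- the recurrence
  have hrecF : ∀ i : Fin (m + 2 - 1),
      lam * W ((i : ℕ) + 1)
        = B (i : ℕ) * D (i : ℕ) - B ((i : ℕ) + 1) * D ((i : ℕ) + 1) := by
    intro i
    have hi := i.isLt
    have hmv : (∑ j : Fin (m + 2 - 1), H i j * v j) = lam * v i := by
      have h := congrFun hmul i
      simpa [Matrix.mulVec, dotProduct] using h
    rw [Finset.sum_congr rfl (fun j _ => hrow i j)] at hmv
    rw [Finset.sum_add_distrib, Finset.sum_add_distrib] at hmv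
    have hs1 : (∑ j : Fin (m + 2 - 1),
        if (j : ℕ) = (i : ℕ) then (B (i : ℕ) + B ((i : ℕ) + 1)) * W ((i : ℕ) + 1) else 0)
        = (B (i : ℕ) + B ((i : ℕ) + 1)) * W ((i : ℕ) + 1) := by
      rw [Finset.sum_eq_single i]
      · rw [if_pos rfl]
      · intro j _ hji
        rw [if_neg (fun h => hji (Fin.ext h))]
      · intro h; exact absurd (Finset.mem_univ i) h
    have hs2 : (∑ j : Fin (m + 2 - 1),
        if (j : ℕ) + 1 = (i : ℕ) then -(B (i : ℕ)) * W (i : ℕ) else 0)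
        = -(B (i : ℕ)) * W (i : ℕ) := by
      by_cases hi0 : (i : ℕ) = 0
      · rw [Finset.sum_eq_zero (fun j _ => by rw [if_neg (by omega)]), hi0, hW0]
        ring
      · rw [Finset.sum_eq_single (⟨(i : ℕ) - 1, by omega⟩ : Fin (m + 2 - 1))]
        · rw [if_pos (by simp; omega)]
        · intro j _ hji
          rw [if_neg (fun h => hji (Fin.ext (by simp; omega)))]
        · intro h; exact absurd (Finset.mem_univ _) h
    have hs3 : (∑ j : Fin (m + 2 - 1),
        if (j : ℕ) = (i : ℕ) + 1 then -(B ((i : ℕ) + 1)) * W ((i : ℕ) + 2) else 0)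
        = -(B ((i : ℕ) + 1)) * W ((i : ℕ) + 2) := by
      by_cases hi1 : (i : ℕ) + 1 < m + 2 - 1
      · rw [Finset.sum_eq_single (⟨(i : ℕ) + 1, hi1⟩ : Fin (m + 2 - 1))]
        · rw [if_pos (by simp)]
        · intro j _ hji
          rw [if_neg (fun h => hji (Fin.ext (by simp; omega)))]
        · intro h; exact absurd (Finset.mem_univ _) h
      · rw [Finset.sum_eq_zero (fun j _ => by rw [if_neg (by have := j.isLt; omega)]),
          hW, dif_neg (by omega)]
        ring
    rw [hs1, hs2, hs3, ← hWv i] at hmv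
    rw [hD, hD, show (i : ℕ) + 1 + 1 = (i : ℕ) + 2 from rfl]
    linarith [hmv]
  have hrec : ∀ k, k < m + 1 → lam * W (k + 1) = B k * D k - B (k + 1) * D (k + 1) := by
    intro k hk
    have h := hrecF ⟨k, by omega⟩
    simpa using h
  -- main identity : lam * S = ∑ B k * D k ^ 2
  have hmain : lam * (∑ k ∈ Finset.range (m + 1), W (k + 1) ^ 2)
      = ∑ k ∈ Finset.range (m + 2), B k * D k ^ 2 := by
    rw [Finset.mul_sum]
    have e1 : ∀ k ∈ Finset.range (m + 1),
        lam * W (k + 1) ^ 2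
          = B k * D k * W (k + 1) - B (k + 1) * D (k + 1) * W (k + 1) := by
      intro k hk
      rw [sq, ← mul_assoc, hrec k (Finset.mem_range.mp hk)]
      ring
    rw [Finset.sum_congr rfl e1, Finset.sum_sub_distrib]
    have e2 : (∑ k ∈ Finset.range (m + 1), B k * D k * W (k + 1))
        = ∑ k ∈ Finset.range (m + 2), B k * D k * W (k + 1) := by
      rw [show m + 2 = m + 1 + 1 from rfl,
        Finset.sum_range_succ (fun k => B k * D k * W (k + 1)) (m + 1), hWtop']
      ring
    have e3 : (∑ k ∈ Finset.range (m + 1), B (k + 1) * D (k + 1) * W (k + 1))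
        = ∑ k ∈ Finset.range (m + 2), B k * D k * W k := by
      rw [show m + 2 = m + 1 + 1 from rfl,
        Finset.sum_range_succ' (fun k => B k * D k * W k) (m + 1), hW0]
      ring
    rw [e2, e3, ← Finset.sum_sub_distrib]
    refine Finset.sum_congr rfl fun k _ => ?_
    rw [hD]
    ring
  -- positivity of S
  have hSpos : 0 < ∑ k ∈ Finset.range (m + 1), W (k + 1) ^ 2 := by
    have hconv : (∑ j : Fin (m + 2 - 1), W ((j : ℕ) + 1) ^ 2)
        = ∑ k ∈ Finset.range (m + 1), W (k + 1) ^ 2 := by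
      rw [Fin.sum_univ_eq_sum_range (fun k => W (k + 1) ^ 2) (m + 2 - 1)]
      rfl
    rw [← hconv]
    obtain ⟨j, hj⟩ : ∃ j, v j ≠ 0 := Function.ne_iff.mp hv0
    refine Finset.sum_pos' (fun i _ => sq_nonneg _) ⟨j, Finset.mem_univ j, ?_⟩
    rw [hWv j]
    exact lt_of_le_of_ne (sq_nonneg _) (Ne.symm (pow_ne_zero 2 hj))
  -- telescoping
  have htel : ∀ k, ∑ j ∈ Finset.range k, D j = W k := by
    intro k
    rw [Finset.sum_congr rfl (fun j _ => hD j), Finset.sum_range_sub W k, hW0, sub_zero]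
  have hIco : ∀ k, k ≤ m + 2 → ∑ j ∈ Finset.Ico k (m + 2), D j = -W k := by
    intro k hk
    rw [Finset.sum_Ico_eq_sub _ hk, htel, htel, hWtop, zero_sub]
  -- pointwise bound
  have hpoint : ∀ k, 1 ≤ k → k ≤ m + 1 →
      ((m : ℝ) + 2) * W k ^ 2
        ≤ (k : ℝ) * (((m : ℝ) + 2) - k) * ∑ j ∈ Finset.range (m + 2), D j ^ 2 := by
    intro k h1 h2
    have hPQ : (∑ j ∈ Finset.range k, D j ^ 2) + (∑ j ∈ Finset.Ico k (m + 2), D j ^ 2)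
        = ∑ j ∈ Finset.range (m + 2), D j ^ 2 :=
      Finset.sum_range_add_sum_Ico _ (by omega)
    have hA : W k ^ 2 ≤ (k : ℝ) * ∑ j ∈ Finset.range k, D j ^ 2 := by
      rw [← htel k]
      have h := sq_sum_le_card_mul_sum_sq (s := Finset.range k) (f := D)
      simpa using h
    have hB2 : W k ^ 2 ≤ (((m : ℝ) + 2) - k) * ∑ j ∈ Finset.Ico k (m + 2), D j ^ 2 := by
      have hW' : W k ^ 2 = (∑ j ∈ Finset.Ico k (m + 2), D j) ^ 2 := by
        rw [hIco k (by omega)]; ring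
      rw [hW']
      have h := sq_sum_le_card_mul_sum_sq (s := Finset.Ico k (m + 2)) (f := D)
      rw [Nat.card_Ico] at h
      have hc2 : ((m + 2 - k : ℕ) : ℝ) = ((m : ℝ) + 2) - (k : ℝ) := by
        rw [Nat.cast_sub (by omega)]; push_cast; ring
      rw [hc2] at h
      exact h
    have hknn : (0 : ℝ) ≤ (k : ℝ) := Nat.cast_nonneg k
    have hmknn : (0 : ℝ) ≤ ((m : ℝ) + 2) - (k : ℝ) := by
      have : (k : ℝ) ≤ (m : ℝ) + 2 := by exact_mod_cast (show k ≤ m + 2 by omega)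
      linarith
    have h1' := mul_le_mul_of_nonneg_left hA hmknn
    have h2' := mul_le_mul_of_nonneg_left hB2 hknn
    have hDS2 : (k : ℝ) * ((((m : ℝ) + 2) - k) * ((∑ j ∈ Finset.range k, D j ^ 2)
          + (∑ j ∈ Finset.Ico k (m + 2), D j ^ 2)))
        = (k : ℝ) * (((m : ℝ) + 2) - k) * ∑ j ∈ Finset.range (m + 2), D j ^ 2 := by
      rw [hPQ]; ring
    nlinarith [h1', h2', hDS2]
  -- summed bound
  have hS_le : ((m : ℝ) + 2) * (∑ k ∈ Finset.range (m + 1), W (k + 1) ^ 2)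
      ≤ (∑ k ∈ Finset.range (m + 1), ((k : ℝ) + 1) * (((m : ℝ) + 2) - ((k : ℝ) + 1)))
          * ∑ j ∈ Finset.range (m + 2), D j ^ 2 := by
    rw [Finset.mul_sum, Finset.sum_mul]
    refine Finset.sum_le_sum fun k hk => ?_
    have h := hpoint (k + 1) (by omega) (by have := Finset.mem_range.mp hk; omega)
    push_cast at h
    linarith [h]
  -- value of the coefficient sum
  have hT : 6 * (∑ k ∈ Finset.range (m + 1), ((k : ℝ) + 1) * (((m : ℝ) + 2) - ((k : ℝ) + 1)))
      = ((m : ℝ) + 2) * (((m : ℝ) + 2) * ((m : ℝ) + 2) - 1) := by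
    have h := gauss_cube (m + 2)
    push_cast at h
    rw [show m + 2 = m + 1 + 1 from rfl,
      Finset.sum_range_succ' (fun j => (j : ℝ) * ((m : ℝ) + 2 - (j : ℝ))) (m + 1)] at h
    push_cast at h
    linarith [h]
  -- divide out (m+2)
  have h6S : 6 * (∑ k ∈ Finset.range (m + 1), W (k + 1) ^ 2)
      ≤ (((m : ℝ) + 2) * ((m : ℝ) + 2) - 1) * ∑ j ∈ Finset.range (m + 2), D j ^ 2 := by
    have hmpos : (0 : ℝ) < (m : ℝ) + 2 := by positivity
    have hTDS : (6 * (∑ k ∈ Finset.range (m + 1), ((k : ℝ) + 1) * (((m : ℝ) + 2) - ((k : ℝ) + 1))))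
          * (∑ j ∈ Finset.range (m + 2), D j ^ 2)
        = (((m : ℝ) + 2) * (((m : ℝ) + 2) * ((m : ℝ) + 2) - 1))
          * (∑ j ∈ Finset.range (m + 2), D j ^ 2) := by
      rw [hT]
    have hmul6 : ((m : ℝ) + 2) * (6 * (∑ k ∈ Finset.range (m + 1), W (k + 1) ^ 2))
        ≤ ((m : ℝ) + 2) * ((((m : ℝ) + 2) * ((m : ℝ) + 2) - 1)
            * ∑ j ∈ Finset.range (m + 2), D j ^ 2) := by
      nlinarith [hS_le, hTDS]
    exact le_of_mul_le_mul_left hmul6 hmpos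
  -- lower bound on the quadratic form
  have hlowB : c * (∑ j ∈ Finset.range (m + 2), D j ^ 2)
      ≤ ∑ k ∈ Finset.range (m + 2), B k * D k ^ 2 := by
    rw [Finset.mul_sum]
    exact Finset.sum_le_sum fun k hk =>
      mul_le_mul_of_nonneg_right (hBc k (Finset.mem_range.mp hk)) (sq_nonneg _)
  have hlamS : c * (∑ j ∈ Finset.range (m + 2), D j ^ 2)
      ≤ lam * (∑ k ∈ Finset.range (m + 1), W (k + 1) ^ 2) := by
    rw [hmain]; exact hlowB
  have hE : (0 : ℝ) < ((m : ℝ) + 2) * ((m : ℝ) + 2) - 1 := by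
    nlinarith [Nat.cast_nonneg (α := ℝ) m]
  have key : 6 * c ≤ lam * (((m : ℝ) + 2) * ((m : ℝ) + 2) - 1) := by
    have h1 : (6 * c) * (∑ k ∈ Finset.range (m + 1), W (k + 1) ^ 2)
        ≤ (lam * (((m : ℝ) + 2) * ((m : ℝ) + 2) - 1))
            * (∑ k ∈ Finset.range (m + 1), W (k + 1) ^ 2) := by
      nlinarith [mul_le_mul_of_nonneg_left h6S hc.le, mul_le_mul_of_nonneg_left hlamS hE.le]
    exact le_of_mul_le_mul_right h1 hSpos
  have hcast : ((m + 2 : ℕ) : ℝ) = (m : ℝ) + 2 := by push_cast; ring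
  rw [hcast, div_le_iff₀ (by nlinarith [Nat.cast_nonneg (α := ℝ) m])]
  nlinarith [key]
end

section
/- Let b₁, …, b_n be positive reals and define Q_n(λ) = (−1)ⁿ det(λ I_{n−1} − H_n) · ∏_{j=1}^n b_j^{−1}, where H_n is the tridiagonal matrix with diagonal b_j + b_{j+1} and off-diagonal −b_{j+1}. Then Q_n(0) = −∑_{j=1}^n 1/b_j. -/
open Matrix

/-- General tridiagonal family. -/
def triM (b : ℕ → ℝ) (k : ℕ) : Matrix (Fin k) (Fin k) ℝ := fun i j =>
  if (i : ℕ) = (j : ℕ) then b i + b ((i : ℕ) + 1)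
  else if (i : ℕ) + 1 = (j : ℕ) ∨ (j : ℕ) + 1 = (i : ℕ) then -b (max (i : ℕ) (j : ℕ))
  else 0

lemma triM_shift1 (b : ℕ → ℝ) (k : ℕ) :
    (triM b (k + 2)).submatrix Fin.succ ((0 : Fin (k + 2)).succAbove) =
      triM (fun i => b (i + 1)) (k + 1) := by
  ext i j
  simp only [Matrix.submatrix_apply, Fin.zero_succAbove, triM, Fin.val_succ]
  have h1 : ((i : ℕ) + 1 = (j : ℕ) + 1) ↔ ((i : ℕ) = (j : ℕ)) := by omega
  have h2 : ((i : ℕ) + 1 + 1 = (j : ℕ) + 1 ∨ (j : ℕ) + 1 + 1 = (i : ℕ) + 1) ↔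
      ((i : ℕ) + 1 = (j : ℕ) ∨ (j : ℕ) + 1 = (i : ℕ)) := by omega
  have hmax : max ((i : ℕ) + 1) ((j : ℕ) + 1) = max (i : ℕ) (j : ℕ) + 1 := by omega
  simp [h1, h2, hmax]

lemma triM_shift2 (b : ℕ → ℝ) (k : ℕ) :
    ((triM b (k + 2)).submatrix Fin.succ ((1 : Fin (k + 2)).succAbove)).submatrix
      Fin.succ Fin.succ = triM (fun i => b (i + 2)) k := by
  ext i j
  have hsa : (1 : Fin (k + 2)).succAbove j.succ = j.succ.succ := by
    apply Fin.succAbove_of_le_castSucc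
    simp [Fin.le_def, Fin.val_one]
  simp only [Matrix.submatrix_apply, hsa, triM, Fin.val_succ]
  have h1 : ((i : ℕ) + 1 + 1 = (j : ℕ) + 1 + 1) ↔ ((i : ℕ) = (j : ℕ)) := by omega
  have h2 : ((i : ℕ) + 1 + 1 + 1 = (j : ℕ) + 1 + 1 ∨ (j : ℕ) + 1 + 1 + 1 = (i : ℕ) + 1 + 1) ↔
      ((i : ℕ) + 1 = (j : ℕ) ∨ (j : ℕ) + 1 = (i : ℕ)) := by omega
  have hmax : max ((i : ℕ) + 1 + 1) ((j : ℕ) + 1 + 1) = max (i : ℕ) (j : ℕ) + 2 := by omega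
  simp [h1, h2, hmax]

lemma triM_det (k : ℕ) : ∀ (b : ℕ → ℝ), (∀ i, b i ≠ 0) →
    (triM b k).det = (∏ i ∈ Finset.range (k + 1), b i) *
      ∑ i ∈ Finset.range (k + 1), (b i)⁻¹ := by
  induction k using Nat.strong_induction_on with
  | _ k ih =>
    match k with
    | 0 =>
      intro b hb
      simp [Matrix.det_fin_zero, mul_inv_cancel₀ (hb 0)]
    | 1 =>
      intro b hb
      have hr : (∏ i ∈ Finset.range 2, b i) * ∑ i ∈ Finset.range 2, (b i)⁻¹ = b 0 + b 1 := by
        have h0 := hb 0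
        have h1 := hb 1
        simp [Finset.prod_range_succ, Finset.sum_range_succ]
        field_simp
        ring
      rw [Matrix.det_fin_one, hr]
      simp [triM]
    | (k + 2) =>
      intro b hb
      have hrec1 := ih (k + 1) (by omega) (fun i => b (i + 1)) (fun i => hb (i + 1))
      have hrec2 := ih k (by omega) (fun i => b (i + 2)) (fun i => hb (i + 2))
      rw [show (k + 2) = (k + 1).succ from rfl, Matrix.det_succ_row_zero]
      rw [Fin.sum_univ_succ, Fin.sum_univ_succ]
      have hz : ∀ j : Fin k, triM b (k + 2) 0 j.succ.succ = 0 := by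
        intro j
        have : ((j.succ.succ : Fin (k + 2)) : ℕ) = (j : ℕ) + 2 := by simp
        simp only [triM, this]
        have h1 : ¬ ((0 : Fin (k+2)) : ℕ) = (j : ℕ) + 2 := by simp
        have h2 : ¬ (((0 : Fin (k+2)) : ℕ) + 1 = (j : ℕ) + 2 ∨
            ((j : ℕ) + 2) + 1 = ((0 : Fin (k+2)) : ℕ)) := by simp
        rw [if_neg h1, if_neg h2]
      have hsum0 : (∑ j : Fin k, (-1 : ℝ) ^ ((j.succ.succ : Fin (k+2)) : ℕ) *
          triM b (k + 2) 0 j.succ.succ *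
          ((triM b (k + 2)).submatrix Fin.succ (j.succ.succ).succAbove).det) = 0 := by
        apply Finset.sum_eq_zero
        intro j _
        rw [hz j]; ring
      rw [hsum0, add_zero]
      -- entries
      have e00 : triM b (k + 2) 0 0 = b 0 + b 1 := by simp [triM]
      have e01 : triM b (k + 2) 0 ((0 : Fin (k+1)).succ) = -b 1 := by
        have : (((0 : Fin (k+1)).succ : Fin (k+2)) : ℕ) = 1 := by simp
        simp [triM, this]
      -- second minor: expand along first column
      have hB : ((triM b (k + 2)).submatrix Fin.succ
          (((0 : Fin (k+1)).succ).succAbove)).det =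
          (-b 1) * (triM (fun i => b (i + 2)) k).det := by
        have h1 : ((0 : Fin (k+1)).succ : Fin (k+2)) = 1 := by
          ext; simp
        rw [h1]
        set B := (triM b (k + 2)).submatrix Fin.succ ((1 : Fin (k+2)).succAbove) with hBdef
        rw [Matrix.det_succ_column_zero]
        rw [Fin.sum_univ_succ]
        have hcol0 : (1 : Fin (k+2)).succAbove 0 = 0 := by
          apply Fin.succAbove_of_castSucc_lt
          simp [Fin.lt_def]
        have hB00 : B 0 0 = -b 1 := by
          simp only [hBdef, Matrix.submatrix_apply, hcol0]
          have : ((Fin.succ (0 : Fin (k+1)) : Fin (k+2)) : ℕ) = 1 := by simp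
          simp [triM, this]
        have hBz : ∀ i : Fin k, B i.succ 0 = 0 := by
          intro i
          simp only [hBdef, Matrix.submatrix_apply, hcol0]
          have hv : ((i.succ.succ : Fin (k+2)) : ℕ) = (i : ℕ) + 2 := by simp
          simp only [triM, hv]
          have h1 : ¬ ((i : ℕ) + 2 = ((0 : Fin (k+2)) : ℕ)) := by simp
          have h2 : ¬ ((i : ℕ) + 2 + 1 = ((0 : Fin (k+2)) : ℕ) ∨
              ((0 : Fin (k+2)) : ℕ) + 1 = (i : ℕ) + 2) := by simp
          rw [if_neg h1, if_neg h2]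
        have hsumz : (∑ i : Fin k, (-1 : ℝ) ^ ((i.succ : Fin (k+1)) : ℕ) * B i.succ 0 *
            (B.submatrix (i.succ).succAbove Fin.succ).det) = 0 := by
          apply Finset.sum_eq_zero
          intro i _
          rw [hBz i]; ring
        rw [hsumz, add_zero, hB00]
        have hmin : B.submatrix ((0 : Fin (k+1)).succAbove) Fin.succ =
            triM (fun i => b (i + 2)) k := by
          have : (0 : Fin (k+1)).succAbove = Fin.succ := by
            funext x; exact Fin.zero_succAbove x
          rw [this, hBdef]
          have := triM_shift2 b k
          rw [← this]
        rw [hmin]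
        simp
      rw [e00, e01, triM_shift1, hB, hrec1, hrec2]
      -- algebra
      have h0 : b 0 ≠ 0 := hb 0
      have h1 : b 1 ≠ 0 := hb 1
      -- rewrite shifted sums/products
      rw [Finset.prod_range_succ' (fun i => b i) (k + 2),
          Finset.sum_range_succ' (fun i => (b i)⁻¹) (k + 2)]
      rw [show ∀ m, Finset.range (m+1) = Finset.range (m+1) from fun _ => rfl]
      have hp1 : (∏ i ∈ Finset.range (k + 2), b (i + 1)) * b 0 *
          ((∑ i ∈ Finset.range (k + 2), (b (i+1))⁻¹) + (b 0)⁻¹) =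
          b 0 * ((∏ i ∈ Finset.range (k + 2), b (i + 1)) *
            (∑ i ∈ Finset.range (k + 2), (b (i+1))⁻¹)) +
          (∏ i ∈ Finset.range (k + 2), b (i + 1)) := by
        field_simp
      rw [hp1]
      rw [Finset.prod_range_succ' (fun i => b (i + 1)) (k + 1),
          Finset.sum_range_succ' (fun i => (b (i + 1))⁻¹) (k + 1)]
      have hp2 : (∏ i ∈ Finset.range (k + 1), b (i + 1 + 1)) * b 1 *
          ((∑ i ∈ Finset.range (k + 1), (b (i + 1 + 1))⁻¹) + (b 1)⁻¹) =
          b 1 * ((∏ i ∈ Finset.range (k + 1), b (i + 1 + 1)) *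
            (∑ i ∈ Finset.range (k + 1), (b (i + 1 + 1))⁻¹)) +
          (∏ i ∈ Finset.range (k + 1), b (i + 1 + 1)) := by
        field_simp
      rw [hp2]
      simp only [show ∀ i, i + 1 + 1 = i + 2 from fun i => rfl, Fin.val_zero, Fin.val_succ,
        pow_zero, pow_one, zero_add]
      ring

theorem tridiagonal_char_poly_at_zero (n : ℕ) (hn : 1 ≤ n)
    (b : Fin n → ℝ) (hb : ∀ j, 0 < b j)
    (H : Matrix (Fin (n - 1)) (Fin (n - 1)) ℝ)
    (hH : ∀ i j : Fin (n - 1),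
      H i j =
        if (i : ℕ) = (j : ℕ) then
          b ⟨i, by have := i.isLt; omega⟩ + b ⟨(i : ℕ) + 1, by have := i.isLt; omega⟩
        else if (i : ℕ) + 1 = (j : ℕ) ∨ (j : ℕ) + 1 = (i : ℕ) then
          -b ⟨max (i : ℕ) (j : ℕ), by have := i.isLt; have := j.isLt; omega⟩
        else 0) :
    (-1 : ℝ) ^ n * ((0 : ℝ) • (1 : Matrix (Fin (n - 1)) (Fin (n - 1)) ℝ) - H).det *
        ∏ j, (b j)⁻¹ = -∑ j, (b j)⁻¹ := by
  classical
  set b' : ℕ → ℝ := fun i => if h : i < n then b ⟨i, h⟩ else 1 with hb'def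
  have hb' : ∀ i, b' i ≠ 0 := by
    intro i
    simp only [hb'def]
    split
    · exact (hb _).ne'
    · exact one_ne_zero
  have hbv : ∀ (m : ℕ) (h : m < n), b' m = b ⟨m, h⟩ := by
    intro m h; simp only [hb'def, dif_pos h]
  have hHM : H = triM b' (n - 1) := by
    ext i j
    have hi := i.isLt
    have hj := j.isLt
    rw [hH i j]
    simp only [triM]
    by_cases h1 : (i : ℕ) = (j : ℕ)
    · rw [if_pos h1, if_pos h1, hbv (i : ℕ) (by omega), hbv ((i : ℕ) + 1) (by omega)]
    · rw [if_neg h1, if_neg h1]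
      by_cases h2 : (i : ℕ) + 1 = (j : ℕ) ∨ (j : ℕ) + 1 = (i : ℕ)
      · rw [if_pos h2, if_pos h2, hbv (max (i : ℕ) (j : ℕ)) (by omega)]
      · rw [if_neg h2, if_neg h2]
  have hdet := triM_det (n - 1) b' hb'
  have hn1 : n - 1 + 1 = n := by omega
  rw [hn1] at hdet
  have hzs : (0 : ℝ) • (1 : Matrix (Fin (n - 1)) (Fin (n - 1)) ℝ) - H = -H := by
    simp
  rw [hzs, Matrix.det_neg, hHM, hdet]
  have hcard : Fintype.card (Fin (n - 1)) = n - 1 := Fintype.card_fin _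
  rw [hcard]
  have hprod : (∏ j : Fin n, (b j)⁻¹) = (∏ i ∈ Finset.range n, b' i)⁻¹ := by
    rw [← Finset.prod_inv_distrib, ← Fin.prod_univ_eq_prod_range (fun i => (b' i)⁻¹) n]
    apply Finset.prod_congr rfl
    intro j _
    rw [hbv (j : ℕ) j.isLt]
  have hsum : (∑ j : Fin n, (b j)⁻¹) = ∑ i ∈ Finset.range n, (b' i)⁻¹ := by
    rw [← Fin.sum_univ_eq_sum_range (fun i => (b' i)⁻¹) n]
    apply Finset.sum_congr rfl
    intro j _
    rw [hbv (j : ℕ) j.isLt]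
  rw [hprod, hsum]
  obtain ⟨m, rfl⟩ : ∃ m, n = m + 1 := ⟨n - 1, by omega⟩
  have hm : m + 1 - 1 = m := by omega
  rw [hm]
  have hP : (∏ i ∈ Finset.range (m + 1), b' i) ≠ 0 :=
    Finset.prod_ne_zero_iff.mpr fun i _ => hb' i
  have hsgn : (-1 : ℝ) ^ (m + 1) * (-1) ^ m = -1 := by
    rw [← pow_add]
    exact Odd.neg_one_pow ⟨m, by ring⟩
  set P := ∏ i ∈ Finset.range (m + 1), b' i
  set S := ∑ i ∈ Finset.range (m + 1), (b' i)⁻¹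
  calc (-1 : ℝ) ^ (m + 1) * ((-1) ^ m * (P * S)) * P⁻¹
      = ((-1 : ℝ) ^ (m + 1) * (-1) ^ m) * (P * P⁻¹ * S) := by ring
    _ = -S := by rw [hsgn, mul_inv_cancel₀ hP]; ring
end

section
/- Let b₁, …, b_n be reals with b_j ≥ c > 0. For each 1 ≤ j' ≤ n−1, the product (∑_{j=1}^{j'} 1/b_j)(∑_{j=j'+1}^n 1/b_j) ≤ (j'(n−j')/(cn)) ∑_{j=1}^n 1/b_j. Consequently, ∑_{j'=1}^{n−1} (∑_{j=1}^{j'} 1/b_j)(∑_{j=j'+1}^n 1/b_j) ≤ ((n−1)(n+1)/(6c)) ∑_{j=1}^n 1/b_j. -/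
lemma sum_Icc_id_real (m : ℕ) : ∑ j ∈ Finset.Icc 1 m, (j : ℝ) = m * (m + 1) / 2 := by
  induction m with
  | zero => simp
  | succ k ih =>
      rw [Finset.sum_Icc_succ_top (by omega), ih]
      push_cast; ring

lemma sum_Icc_sq_real (m : ℕ) : ∑ j ∈ Finset.Icc 1 m, (j : ℝ)^2 = m * (m + 1) * (2 * m + 1) / 6 := by
  induction m with
  | zero => simp
  | succ k ih =>
      rw [Finset.sum_Icc_succ_top (by omega), ih]
      push_cast; ring

theorem split_sum_inverse_bound (n : ℕ) (hn : 2 ≤ n) (c : ℝ) (hc : 0 < c)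
    (b : ℕ → ℝ) (hb : ∀ j ∈ Finset.Icc 1 n, c ≤ b j) :
    (∀ j' ∈ Finset.Icc 1 (n - 1),
      (∑ j ∈ Finset.Icc 1 j', (b j)⁻¹) * (∑ j ∈ Finset.Icc (j' + 1) n, (b j)⁻¹) ≤
        ((j' : ℝ) * ((n : ℝ) - (j' : ℝ)) / (c * n)) * ∑ j ∈ Finset.Icc 1 n, (b j)⁻¹) ∧
    (∑ j' ∈ Finset.Icc 1 (n - 1),
        (∑ j ∈ Finset.Icc 1 j', (b j)⁻¹) * (∑ j ∈ Finset.Icc (j' + 1) n, (b j)⁻¹)) ≤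
      (((n : ℝ) - 1) * ((n : ℝ) + 1) / (6 * c)) * ∑ j ∈ Finset.Icc 1 n, (b j)⁻¹ := by
  have hn0 : (0 : ℝ) < n := by positivity
  have hinv : ∀ j ∈ Finset.Icc 1 n, (0 : ℝ) ≤ (b j)⁻¹ ∧ (b j)⁻¹ ≤ c⁻¹ := by
    intro j hj
    have hbj := hb j hj
    constructor
    · exact inv_nonneg.mpr (le_trans hc.le hbj)
    · exact inv_anti₀ hc hbj
  have key : ∀ j' ∈ Finset.Icc 1 (n - 1),
      (∑ j ∈ Finset.Icc 1 j', (b j)⁻¹) * (∑ j ∈ Finset.Icc (j' + 1) n, (b j)⁻¹) ≤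
        ((j' : ℝ) * ((n : ℝ) - (j' : ℝ)) / (c * n)) * ∑ j ∈ Finset.Icc 1 n, (b j)⁻¹ := by
    intro j' hj'
    obtain ⟨h1, h2⟩ := Finset.mem_Icc.mp hj'
    have hj'n : j' < n := by omega
    set A := ∑ j ∈ Finset.Icc 1 j', (b j)⁻¹ with hA
    set B := ∑ j ∈ Finset.Icc (j' + 1) n, (b j)⁻¹ with hB
    have hsub1 : Finset.Icc 1 j' ⊆ Finset.Icc 1 n := Finset.Icc_subset_Icc_right (by omega)
    have hsub2 : Finset.Icc (j' + 1) n ⊆ Finset.Icc 1 n := Finset.Icc_subset_Icc_left (by omega)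
    have hsplit : ∑ j ∈ Finset.Icc 1 n, (b j)⁻¹ = A + B := by
      have e0 : ∀ m, Finset.Icc 1 m = Finset.Ioc 0 m := fun m => Finset.Icc_add_one_left_eq_Ioc 0 m
      have e1 : Finset.Icc (j' + 1) n = Finset.Ioc j' n := Finset.Icc_add_one_left_eq_Ioc j' n
      rw [hA, hB, e0, e0, e1]
      exact (Finset.sum_Ioc_consecutive _ (Nat.zero_le j') hj'n.le).symm
    have hA0 : 0 ≤ A := Finset.sum_nonneg fun j hj => (hinv j (hsub1 hj)).1
    have hB0 : 0 ≤ B := Finset.sum_nonneg fun j hj => (hinv j (hsub2 hj)).1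
    have hAle : A ≤ (j' : ℝ) * c⁻¹ := by
      calc A ≤ ∑ j ∈ Finset.Icc 1 j', c⁻¹ :=
            Finset.sum_le_sum fun j hj => (hinv j (hsub1 hj)).2
        _ = (j' : ℝ) * c⁻¹ := by
            rw [Finset.sum_const, Nat.card_Icc]; simp [nsmul_eq_mul]
    have hBle : B ≤ ((n : ℝ) - j') * c⁻¹ := by
      calc B ≤ ∑ j ∈ Finset.Icc (j' + 1) n, c⁻¹ :=
            Finset.sum_le_sum fun j hj => (hinv j (hsub2 hj)).2
        _ = ((n : ℝ) - j') * c⁻¹ := by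
            rw [Finset.sum_const, Nat.card_Icc, nsmul_eq_mul]
            congr 1
            have hcard : n + 1 - (j' + 1) = n - j' := by omega
            rw [hcard, Nat.cast_sub hj'n.le]
    rw [hsplit, div_mul_eq_mul_div, le_div_iff₀ (by positivity)]
    have hcA : c * A ≤ (j' : ℝ) := by
      have h := mul_le_mul_of_nonneg_left hAle hc.le
      calc c * A ≤ c * ((j' : ℝ) * c⁻¹) := h
        _ = (j' : ℝ) := by field_simp
    have hcB : c * B ≤ (n : ℝ) - j' := by
      have h := mul_le_mul_of_nonneg_left hBle hc.le
      calc c * B ≤ c * (((n : ℝ) - j') * c⁻¹) := h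
        _ = (n : ℝ) - j' := by field_simp
    have hj'pos : (0 : ℝ) ≤ (j' : ℝ) := by positivity
    have hnj' : (0 : ℝ) ≤ (n : ℝ) - j' := by
      have h : (j' : ℝ) ≤ n := by exact_mod_cast hj'n.le
      linarith
    have h3 : ((n : ℝ) - j') * B * (c * A) ≤ ((n : ℝ) - j') * B * j' :=
      mul_le_mul_of_nonneg_left hcA (mul_nonneg hnj' hB0)
    have h4 : (j' : ℝ) * A * (c * B) ≤ (j' : ℝ) * A * ((n : ℝ) - j') :=
      mul_le_mul_of_nonneg_left hcB (mul_nonneg hj'pos hA0)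
    nlinarith [h3, h4]
  refine ⟨key, ?_⟩
  have hS0 : 0 ≤ ∑ j ∈ Finset.Icc 1 n, (b j)⁻¹ :=
    Finset.sum_nonneg fun j hj => (hinv j hj).1
  calc (∑ j' ∈ Finset.Icc 1 (n - 1),
        (∑ j ∈ Finset.Icc 1 j', (b j)⁻¹) * (∑ j ∈ Finset.Icc (j' + 1) n, (b j)⁻¹))
      ≤ ∑ j' ∈ Finset.Icc 1 (n - 1),
        ((j' : ℝ) * ((n : ℝ) - (j' : ℝ)) / (c * n)) * ∑ j ∈ Finset.Icc 1 n, (b j)⁻¹ :=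
        Finset.sum_le_sum key
    _ = (∑ j' ∈ Finset.Icc 1 (n - 1), (j' : ℝ) * ((n : ℝ) - (j' : ℝ))) / (c * n)
          * ∑ j ∈ Finset.Icc 1 n, (b j)⁻¹ := by
        rw [← Finset.sum_mul, ← Finset.sum_div]
    _ = (((n : ℝ) - 1) * ((n : ℝ) + 1) / (6 * c)) * ∑ j ∈ Finset.Icc 1 n, (b j)⁻¹ := by
        congr 1
        have hid : ∑ j' ∈ Finset.Icc 1 (n - 1), (j' : ℝ) * ((n : ℝ) - (j' : ℝ))
            = (n : ℝ) * ((n : ℝ) - 1) * ((n : ℝ) + 1) / 6 := by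
          have e1 : ∑ j' ∈ Finset.Icc 1 (n - 1), (j' : ℝ) * ((n : ℝ) - (j' : ℝ))
              = (n : ℝ) * (∑ j' ∈ Finset.Icc 1 (n - 1), (j' : ℝ))
                - ∑ j' ∈ Finset.Icc 1 (n - 1), (j' : ℝ)^2 := by
            rw [Finset.mul_sum, ← Finset.sum_sub_distrib]
            apply Finset.sum_congr rfl
            intro x _; ring
          rw [e1, sum_Icc_id_real, sum_Icc_sq_real]
          have hm : ((n - 1 : ℕ) : ℝ) = (n : ℝ) - 1 := by
            have h : 1 ≤ n := by omega
            push_cast [Nat.cast_sub h]; ring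
          rw [hm]; ring
        rw [hid]
        field_simp
end

section
/- Let V : ℝ → ℝ be continuous with c₋r²/2 ≤ V(r) ≤ c₊r²/2 (0 < c₋ ≤ c₊), G(τ) = log ∫_ℝ exp(−V(r) + τr) dr, and π_τ(dr) = exp(−V(r) + τr − G(τ)) dr. Suppose |F(r)| ≤ c|r| for all r. Then for every t with 0 < t < c₋/(2c²), E_{π_τ}[exp(t F²)] ≤ (c₊/(c₋ − 2tc²)) exp((τ²/2)(1/(c₋ − 2tc²) − 1/c₊)). -/
open MeasureTheory Real
open scoped ENNReal NNReal

lemma gauss_lin_eq {a : ℝ} (ha : 0 < a) (τ : ℝ) :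
    (fun r : ℝ => Real.exp (-(a/2) * r^2 + τ * r)) =
      fun r : ℝ => Real.exp (τ^2/(2*a)) * Real.exp (-(a/2) * (r - τ/a)^2) := by
  funext r
  rw [← Real.exp_add]
  congr 1
  field_simp
  ring

lemma gauss_lin_integrable {a : ℝ} (ha : 0 < a) (τ : ℝ) :
    Integrable (fun r : ℝ => Real.exp (-(a/2) * r^2 + τ * r)) := by
  rw [gauss_lin_eq ha τ]
  exact ((integrable_exp_neg_mul_sq (by linarith : (0:ℝ) < a/2)).comp_sub_right
    (τ/a)).const_mul _

lemma gauss_lin_integral {a : ℝ} (ha : 0 < a) (τ : ℝ) :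
    ∫ r : ℝ, Real.exp (-(a/2) * r^2 + τ * r) =
      Real.sqrt (2*π/a) * Real.exp (τ^2/(2*a)) := by
  rw [gauss_lin_eq ha τ, MeasureTheory.integral_const_mul]
  rw [integral_sub_right_eq_self (fun x : ℝ => Real.exp (-(a/2) * x^2)) (τ/a)]
  rw [integral_gaussian]
  rw [show π / (a/2) = 2*π/a by field_simp]
  ring

theorem exp_sq_moment_tilted_measure (V : ℝ → ℝ) (hV : Continuous V)
    (cm cp : ℝ) (h0 : 0 < cm) (hmp : cm ≤ cp)
    (hVb : ∀ r : ℝ, cm * r ^ 2 / 2 ≤ V r ∧ V r ≤ cp * r ^ 2 / 2)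
    (τ c : ℝ) (hc : 0 < c) (F : ℝ → ℝ) (hFm : Measurable F)
    (hF : ∀ r : ℝ, |F r| ≤ c * |r|) :
    let G : ℝ := Real.log (∫ r : ℝ, Real.exp (-V r + τ * r))
    let pit : Measure ℝ :=
      MeasureTheory.volume.withDensity fun r => ENNReal.ofReal (Real.exp (-V r + τ * r - G))
    ∀ t : ℝ, 0 < t → t < cm / (2 * c ^ 2) →
      ∫ r, Real.exp (t * (F r) ^ 2) ∂pit ≤
        (cp / (cm - 2 * t * c ^ 2)) *
          Real.exp ((τ ^ 2 / 2) * (1 / (cm - 2 * t * c ^ 2) - 1 / cp)) := by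
  intro G pit t ht htc
  have hcp : 0 < cp := lt_of_lt_of_le h0 hmp
  set a : ℝ := cm - 2 * t * c ^ 2 with ha_def
  have hc2 : (0:ℝ) < 2 * c ^ 2 := by positivity
  have ha : 0 < a := by
    have := (lt_div_iff₀ hc2).mp htc
    rw [ha_def]; nlinarith
  have hacp : a ≤ cp := by
    have : 0 < 2 * t * c ^ 2 := by positivity
    rw [ha_def]; linarith
  -- continuity / measurability
  have hcont : Continuous fun r : ℝ => Real.exp (-V r + τ * r) :=
    ((hV.neg).add (continuous_const.mul continuous_id)).rexp
  -- integrability of the base density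
  have int_cm : Integrable (fun r : ℝ => Real.exp (-(cm/2) * r^2 + τ * r)) :=
    gauss_lin_integrable h0 τ
  have intV : Integrable (fun r : ℝ => Real.exp (-V r + τ * r)) := by
    refine int_cm.mono' hcont.aestronglyMeasurable (ae_of_all _ fun r => ?_)
    rw [Real.norm_eq_abs, abs_of_pos (Real.exp_pos _)]
    apply Real.exp_le_exp.mpr
    have := (hVb r).1
    nlinarith
  -- lower bound for the normalization
  have int_cp : Integrable (fun r : ℝ => Real.exp (-(cp/2) * r^2 + τ * r)) :=
    gauss_lin_integrable hcp τ
  have hlow : Real.sqrt (2*π/cp) * Real.exp (τ^2/(2*cp)) ≤ ∫ r : ℝ, Real.exp (-V r + τ * r) := by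
    rw [← gauss_lin_integral hcp τ]
    refine integral_mono int_cp intV fun r => ?_
    apply Real.exp_le_exp.mpr
    have := (hVb r).2
    nlinarith
  have hB : 0 < Real.sqrt (2*π/cp) * Real.exp (τ^2/(2*cp)) := by
    apply mul_pos _ (Real.exp_pos _)
    apply Real.sqrt_pos.mpr
    positivity
  have heGpos : 0 < ∫ r : ℝ, Real.exp (-V r + τ * r) := lt_of_lt_of_le hB hlow
  have hexpG : Real.exp G = ∫ r : ℝ, Real.exp (-V r + τ * r) := Real.exp_log heGpos
  -- rewrite the integral against pit
  have hpit : pit = MeasureTheory.volume.withDensity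
      fun r => ENNReal.ofReal (Real.exp (-V r + τ * r - G)) := rfl
  have hcontd : Continuous fun r : ℝ => Real.exp (-V r + τ * r - G) :=
    (((hV.neg).add (continuous_const.mul continuous_id)).sub continuous_const).rexp
  have hmeasd : Measurable fun r : ℝ => (Real.exp (-V r + τ * r - G)).toNNReal :=
    (measurable_real_toNNReal.comp hcontd.measurable)
  have hint_eq : ∫ r, Real.exp (t * (F r) ^ 2) ∂pit
      = ∫ r : ℝ, Real.exp (-V r + τ * r - G) * Real.exp (t * (F r) ^ 2) := by
    rw [hpit]
    have : (fun r : ℝ => ENNReal.ofReal (Real.exp (-V r + τ * r - G)))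
        = fun r : ℝ => ((Real.exp (-V r + τ * r - G)).toNNReal : ℝ≥0∞) := rfl
    rw [this, integral_withDensity_eq_integral_smul hmeasd]
    congr 1
    funext r
    rw [NNReal.smul_def, smul_eq_mul, Real.coe_toNNReal _ (Real.exp_pos _).le]
  -- pointwise bound on the integrand
  have hpt : ∀ r : ℝ, Real.exp (-V r + τ * r - G) * Real.exp (t * (F r) ^ 2)
      ≤ Real.exp (-G) * Real.exp (-(a/2) * r^2 + τ * r) := by
    intro r
    rw [← Real.exp_add, ← Real.exp_add]
    apply Real.exp_le_exp.mpr
    have h1 : (F r)^2 ≤ c^2 * r^2 := by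
      have h2 := mul_self_le_mul_self (abs_nonneg (F r)) (hF r)
      nlinarith [sq_abs (F r), sq_abs r, abs_nonneg r, hc.le]
    have h5 : t * (F r)^2 ≤ t * (c^2 * r^2) := by nlinarith
    have h6 := (hVb r).1
    rw [ha_def]
    nlinarith
  -- integrability of the integrand
  have int_a : Integrable (fun r : ℝ => Real.exp (-(a/2) * r^2 + τ * r)) :=
    gauss_lin_integrable ha τ
  have int_bound : Integrable (fun r : ℝ => Real.exp (-G) * Real.exp (-(a/2) * r^2 + τ * r)) :=
    int_a.const_mul _
  have hmeash : AEStronglyMeasurable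
      (fun r : ℝ => Real.exp (-V r + τ * r - G) * Real.exp (t * (F r) ^ 2)) volume := by
    apply Measurable.aestronglyMeasurable
    exact (hcontd.measurable).mul ((measurable_const.mul (hFm.pow_const 2)).exp)
  have int_h : Integrable
      (fun r : ℝ => Real.exp (-V r + τ * r - G) * Real.exp (t * (F r) ^ 2)) := by
    refine int_bound.mono' hmeash (ae_of_all _ fun r => ?_)
    rw [Real.norm_eq_abs, abs_of_pos (mul_pos (Real.exp_pos _) (Real.exp_pos _))]
    exact hpt r
  -- main chain
  have step1 : ∫ r : ℝ, Real.exp (-V r + τ * r - G) * Real.exp (t * (F r) ^ 2)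
      ≤ Real.exp (-G) * (Real.sqrt (2*π/a) * Real.exp (τ^2/(2*a))) := by
    calc ∫ r : ℝ, Real.exp (-V r + τ * r - G) * Real.exp (t * (F r) ^ 2)
        ≤ ∫ r : ℝ, Real.exp (-G) * Real.exp (-(a/2) * r^2 + τ * r) :=
          integral_mono int_h int_bound hpt
      _ = Real.exp (-G) * (Real.sqrt (2*π/a) * Real.exp (τ^2/(2*a))) := by
          rw [MeasureTheory.integral_const_mul, gauss_lin_integral ha τ]
  have hexpnegG : Real.exp (-G) ≤ (Real.sqrt (2*π/cp) * Real.exp (τ^2/(2*cp)))⁻¹ := by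
    rw [Real.exp_neg, hexpG]
    exact inv_anti₀ hB hlow
  have step2 : Real.exp (-G) * (Real.sqrt (2*π/a) * Real.exp (τ^2/(2*a)))
      ≤ (Real.sqrt (2*π/a) * Real.exp (τ^2/(2*a))) / (Real.sqrt (2*π/cp) * Real.exp (τ^2/(2*cp))) := by
    have hA : 0 ≤ Real.sqrt (2*π/a) * Real.exp (τ^2/(2*a)) := by positivity
    calc Real.exp (-G) * (Real.sqrt (2*π/a) * Real.exp (τ^2/(2*a)))
        ≤ (Real.sqrt (2*π/cp) * Real.exp (τ^2/(2*cp)))⁻¹ * (Real.sqrt (2*π/a) * Real.exp (τ^2/(2*a))) :=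
          mul_le_mul_of_nonneg_right hexpnegG hA
      _ = _ := (div_eq_inv_mul _ _).symm
  -- final algebra
  have hsqrt : Real.sqrt (2*π/a) ≤ (cp/a) * Real.sqrt (2*π/cp) := by
    have h1 : (cp/a) * Real.sqrt (2*π/cp) = Real.sqrt ((cp/a)^2 * (2*π/cp)) := by
      rw [Real.sqrt_mul (sq_nonneg _), Real.sqrt_sq (by positivity : (0:ℝ) ≤ cp/a)]
    rw [h1]
    apply Real.sqrt_le_sqrt
    have h2 : (cp/a)^2 * (2*π/cp) = (2*π/a) * (cp/a) := by field_simp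
    rw [h2]
    exact le_mul_of_one_le_right (by positivity) ((one_le_div ha).mpr hacp)
  have hexpsplit : Real.exp (τ^2/(2*a))
      = Real.exp ((τ ^ 2 / 2) * (1 / a - 1 / cp)) * Real.exp (τ^2/(2*cp)) := by
    rw [← Real.exp_add]
    congr 1
    field_simp
    ring
  have step3 : (Real.sqrt (2*π/a) * Real.exp (τ^2/(2*a))) / (Real.sqrt (2*π/cp) * Real.exp (τ^2/(2*cp)))
      ≤ (cp / a) * Real.exp ((τ ^ 2 / 2) * (1 / a - 1 / cp)) := by
    rw [div_le_iff₀ hB, hexpsplit]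
    calc Real.sqrt (2*π/a) * (Real.exp ((τ ^ 2 / 2) * (1 / a - 1 / cp)) * Real.exp (τ^2/(2*cp)))
        ≤ ((cp/a) * Real.sqrt (2*π/cp)) * (Real.exp ((τ ^ 2 / 2) * (1 / a - 1 / cp)) * Real.exp (τ^2/(2*cp))) :=
          mul_le_mul_of_nonneg_right hsqrt (by positivity)
      _ = cp / a * Real.exp (τ ^ 2 / 2 * (1 / a - 1 / cp)) * (Real.sqrt (2 * π / cp) * Real.exp (τ ^ 2 / (2 * cp))) := by ring
  rw [hint_eq]
  exact le_trans step1 (le_trans step2 step3)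
end
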